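/- For every 2-bounded coloring f : [ℕ]^{!ω} → ℕ there exists a coloring g : [ℕ]^{!ω} → ℕ such that every infinite set A ⊆ ℕ that is free for g is a rainbow for f. -/
import Mathlib


/-- A finite set `s ⊆ ℕ` is exactly ω-large if `|s| = 1 + min s`. -/
def ExLarge (s : Finset ℕ) : Prop :=
  s.Nonempty ∧ s.card = 1 + sInf (↑s : Set ℕ)

/-- `f : [ℕ]^{!ω} → ℕ` is `k`-bounded: every color has at most `k`
exactly ω-large preimages. -/
def KBoundedL (k : ℕ) (f : Finset ℕ → ℕ) : Prop :=
  ∀ c : ℕ, ∃ T : Finset (Finset ℕ), T.card ≤ k ∧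
    ∀ u : Finset ℕ, ExLarge u → f u = c → u ∈ T

/-- `H` is free for `g : [ℕ]^{!ω} → ℕ`. -/
def FreeL (g : Finset ℕ → ℕ) (H : Set ℕ) : Prop :=
  ∀ s : Finset ℕ, ExLarge s → ↑s ⊆ H → g s ∈ H → g s ∈ s

/-- `H` is a rainbow for `f : [ℕ]^{!ω} → ℕ`: `f` is injective on `[H]^{!ω}`. -/
def RainbowL (f : Finset ℕ → ℕ) (H : Set ℕ) : Prop :=
  ∀ s t : Finset ℕ, ExLarge s → ExLarge t → ↑s ⊆ H → ↑t ⊆ H → f s = f t → s = t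

/-- If a finset has at most 2 elements containing `a`, `b`, `c` with
`b ≠ a` and `c ≠ a`, then `b = c`. -/
lemma two_bounded_unique {α : Type*} [DecidableEq α] {T : Finset α}
    (hT : T.card ≤ 2) {a b c : α} (ha : a ∈ T) (hb : b ∈ T) (hc : c ∈ T)
    (hba : b ≠ a) (hca : c ≠ a) : b = c := by
  by_contra hbc
  have hsub : ({a, b, c} : Finset α) ⊆ T := by
    intro x hx
    simp only [Finset.mem_insert, Finset.mem_singleton] at hx
    rcases hx with rfl | rfl | rfl <;> assumption
  have h3 : ({a, b, c} : Finset α).card = 3 := by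
    rw [Finset.card_insert_of_notMem (by simp [hba.symm, hca.symm]),
      Finset.card_insert_of_notMem (by simp [hbc]), Finset.card_singleton]
  have := Finset.card_le_card hsub
  omega

/-- for every 2-bounded `f : [ℕ]^{!ω} → ℕ` there exists
`g : [ℕ]^{!ω} → ℕ` such that every infinite `g`-free set is an `f`-rainbow. -/
theorem stmt11 (f : Finset ℕ → ℕ) (hf : KBoundedL 2 f) :
    ∃ g : Finset ℕ → ℕ,
      ∀ A : Set ℕ, A.Infinite → FreeL g A → RainbowL f A := by
  classical
  refine ⟨fun s =>
    if h : ∃ t : Finset ℕ, ExLarge t ∧ t ≠ s ∧ f t = f s ∧ (t \ s).Nonempty then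
      (h.choose \ s).min' h.choose_spec.2.2.2
    else 0, ?_⟩
  intro A _ hfree s t hs ht hsA htA hfst
  by_contra hst
  -- key: if (t \ s) is nonempty, contradiction via freeness at s
  have key : ∀ s t : Finset ℕ, ExLarge s → ExLarge t → ↑s ⊆ A → ↑t ⊆ A →
      f s = f t → t ≠ s → (t \ s).Nonempty → False := by
    intro s t hs ht hsA htA hfst hts hne
    have hex : ∃ u : Finset ℕ, ExLarge u ∧ u ≠ s ∧ f u = f s ∧ (u \ s).Nonempty :=
      ⟨t, ht, hts, hfst.symm, hne⟩
    obtain ⟨hu1, hu2, hu3, hu4⟩ := hex.choose_spec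
    -- by 2-boundedness, hex.choose = t
    obtain ⟨T, hT, hmem⟩ := hf (f s)
    have hut : hex.choose = t :=
      two_bounded_unique hT (hmem s hs rfl) (hmem _ hu1 hu3) (hmem t ht hfst.symm)
        hu2 hts
    have hgs : (if h : ∃ u : Finset ℕ, ExLarge u ∧ u ≠ s ∧ f u = f s ∧ (u \ s).Nonempty then
        (h.choose \ s).min' h.choose_spec.2.2.2 else 0) ∈ t \ s := by
      rw [dif_pos hex]
      have hsub : (hex.choose \ s : Finset ℕ) ⊆ t \ s := by rw [hut]
      exact hsub (Finset.min'_mem (hex.choose \ s) hex.choose_spec.2.2.2)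
    rw [Finset.mem_sdiff] at hgs
    have hA : (if h : ∃ u : Finset ℕ, ExLarge u ∧ u ≠ s ∧ f u = f s ∧ (u \ s).Nonempty then
        (h.choose \ s).min' h.choose_spec.2.2.2 else 0) ∈ A := htA hgs.1
    exact hgs.2 (hfree s hs hsA hA)
  rcases (t \ s).eq_empty_or_nonempty with he | hne
  · -- t ⊆ s, so s \ t nonempty since s ≠ t
    have hts : t ⊆ s := by
      intro x hx
      by_contra hxs
      exact (Finset.notMem_empty x) (he ▸ Finset.mem_sdiff.mpr ⟨hx, hxs⟩)
    have hne' : (s \ t).Nonempty := by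
      rw [Finset.sdiff_nonempty]
      intro hsub
      exact hst (Finset.Subset.antisymm hsub hts)
    exact key t s ht hs htA hsA hfst.symm hst hne'
  · exact key s t hs ht hsA htA hfst (fun h => hst h.symm) hne
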